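/- For k ≥ 1 and r ∈ ℕ, the dual theta polynomial ϑ̂_r(x;y) = ∑_i q_{r-i}(x) h_i(y) equals the theta polynomial Θ_{(1^r)}(x;y) indexed by the column partition (1,...,1) of length r; concretely, det(ϑ_{1+j−i}(x;y))_{1≤i,j≤r} = ϑ̂_r(x;y). -/

import Mathlib

/-- `e_i(y)` for `i : ℕ`. -/
def esymmVal {R : Type*} [CommRing R] {k : ℕ} (y : Fin k → R) (i : ℕ) : R :=
  ∑ s ∈ Finset.powersetCard i (Finset.univ : Finset (Fin k)), ∏ j ∈ s, y j

/-- `ϑ_r(x;y) = ∑_i q_{r-i}(x) e_i(y)` for `r : ℤ` (zero for negative `r`). -/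
noncomputable def thInt {R : Type*} [CommRing R] {k : ℕ}
    (Q : PowerSeries R) (y : Fin k → R) (r : ℤ) : R :=
  if 0 ≤ r then
    ∑ i ∈ Finset.range (r.toNat + 1), PowerSeries.coeff (r.toNat - i) Q * esymmVal y i
  else 0

open Finset PowerSeries

section Aux
variable {R : Type*} [CommRing R]



lemma rescale_C' (a c : R) : rescale a (PowerSeries.C c) = PowerSeries.C c := by
  ext n
  rcases n with _ | n <;> simp [coeff_rescale, PowerSeries.coeff_C]

lemma rescale_neg_one_add (c : R) :
    rescale (-1 : R) (1 + PowerSeries.C c * PowerSeries.X) = 1 - PowerSeries.C c * PowerSeries.X := by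
  rw [map_add, map_one, map_mul, rescale_C', rescale_neg_one_X, mul_neg, ← sub_eq_add_neg]

lemma rescale_neg_one_sub (c : R) :
    rescale (-1 : R) (1 - PowerSeries.C c * PowerSeries.X) = 1 + PowerSeries.C c * PowerSeries.X := by
  rw [map_sub, map_one, map_mul, rescale_C', rescale_neg_one_X, mul_neg, sub_neg_eq_add]

lemma key_unit {n : ℕ} (x : Fin n → R) (Q : PowerSeries R)
    (hQ : Q * ∏ i : Fin n, (1 - PowerSeries.C (x i) * PowerSeries.X) =
          ∏ i : Fin n, (1 + PowerSeries.C (x i) * PowerSeries.X)) :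
    Q * rescale (-1 : R) Q = 1 := by
  set Pm := ∏ i : Fin n, (1 - PowerSeries.C (x i) * PowerSeries.X) with hPm
  set Pp := ∏ i : Fin n, (1 + PowerSeries.C (x i) * PowerSeries.X) with hPp
  have hrm : rescale (-1 : R) Pm = Pp := by
    rw [hPm, map_prod]; exact Finset.prod_congr rfl fun i _ => rescale_neg_one_sub _
  have hrp : rescale (-1 : R) Pp = Pm := by
    rw [hPp, map_prod]; exact Finset.prod_congr rfl fun i _ => rescale_neg_one_add _
  have h2 : rescale (-1 : R) Q * Pp = Pm := by
    have := congrArg (rescale (-1 : R)) hQ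
    rwa [map_mul, hrm, hrp] at this
  have hU : IsUnit (Pm * Pp) := by
    rw [PowerSeries.isUnit_iff_constantCoeff]
    simp [hPm, hPp, map_prod]
  refine hU.mul_left_cancel ?_
  calc Pm * Pp * (Q * rescale (-1 : R) Q) = (Q * Pm) * (rescale (-1 : R) Q * Pp) := by ring
    _ = Pp * Pm := by rw [hQ, h2]
    _ = Pm * Pp * 1 := by ring



lemma toeplitz_det (a b : ℕ → R) (ha0 : a 0 = 1)
    (hconv : ∀ n : ℕ, ∑ m ∈ Finset.range (n+1), (-1 : R)^m * a m * b (n-m)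
      = if n = 0 then 1 else 0)
    (r : ℕ) :
    (Matrix.of fun i j : Fin r =>
      if (i:ℕ) ≤ (j:ℕ)+1 then a ((j:ℕ)+1-(i:ℕ)) else 0).det = b r := by
  have hb0 : b 0 = 1 := by simpa [ha0] using hconv 0
  have hstep : ∀ n : ℕ, ∑ m ∈ Finset.range (n+1), (-1:R)^m * a (m+1) * b (n-m) = b (n+1) := by
    intro n
    have h := hconv (n+1)
    rw [Finset.sum_range_succ'] at h
    have h2 : ∑ i ∈ Finset.range (n+1), (-1:R)^(i+1) * a (i+1) * b (n+1-(i+1))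
        = -∑ i ∈ Finset.range (n+1), (-1:R)^i * a (i+1) * b (n-i) := by
      rw [← Finset.sum_neg_distrib]
      refine Finset.sum_congr rfl fun i hi => ?_
      have hni : n+1-(i+1) = n-i := by omega
      rw [hni, pow_succ]; ring
    rw [h2] at h
    simp only [ha0, pow_zero, one_mul, Nat.sub_zero] at h
    rw [if_neg (Nat.succ_ne_zero n)] at h
    linear_combination -h
  rcases r with _ | s
  · simp [Matrix.det_fin_zero, hb0]
  set r := s + 1 with hr
  set M : Matrix (Fin r) (Fin r) R := Matrix.of fun i j : Fin r =>
      if (i:ℕ) ≤ (j:ℕ)+1 then a ((j:ℕ)+1-(i:ℕ)) else 0 with hM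
  set T : Matrix (Fin r) (Fin r) R := Matrix.of fun l j : Fin r =>
      if (l:ℕ) ≤ (j:ℕ) then (-1:R)^((l:ℕ)+(j:ℕ)) * b ((j:ℕ)-(l:ℕ)) else 0 with hT
  set N : Matrix (Fin r) (Fin r) R := Matrix.of fun i j : Fin r =>
      if (i:ℕ) = 0 then (-1:R)^(j:ℕ) * b ((j:ℕ)+1)
      else if (j:ℕ)+1 = (i:ℕ) then 1 else 0 with hN
  have hdetT : T.det = 1 := by
    have htri : T.BlockTriangular id := by
      intro i j hij
      simp only [hT, Matrix.of_apply]
      rw [if_neg]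
      simpa using hij
    rw [Matrix.det_of_upperTriangular htri]
    refine Finset.prod_eq_one fun l _ => ?_
    simp only [hT, Matrix.of_apply, le_refl, if_pos, Nat.sub_self, hb0, mul_one]
    rw [← two_mul, pow_mul]
    norm_num
  have hMT : M * T = N := by
    ext i j
    set g : ℕ → R := fun l =>
      (if (i:ℕ) ≤ l+1 then a (l+1-(i:ℕ)) else 0) *
      (if l ≤ (j:ℕ) then (-1:R)^(l+(j:ℕ)) * b ((j:ℕ)-l) else 0) with hg
    have hsum : (M * T) i j = ∑ l ∈ Finset.range r, g l := by
      rw [Matrix.mul_apply, ← Fin.sum_univ_eq_sum_range g r]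
      rfl
    rw [hsum]
    by_cases hi : (i:ℕ) = 0
    · -- first row
      have hshrink : ∑ l ∈ Finset.range r, g l = ∑ l ∈ Finset.range ((j:ℕ)+1), g l := by
        refine (Finset.sum_subset (by
          intro l hl
          simp only [Finset.mem_range] at hl ⊢
          omega) ?_).symm
        intro l hl hnl
        simp only [Finset.mem_range] at hl hnl
        have : ¬ (l ≤ (j:ℕ)) := by omega
        simp [hg, this]
      rw [hshrink]
      have hval : ∑ l ∈ Finset.range ((j:ℕ)+1), g l
          = (-1:R)^(j:ℕ) * ∑ l ∈ Finset.range ((j:ℕ)+1), (-1:R)^l * a (l+1) * b ((j:ℕ)-l) := by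
        rw [Finset.mul_sum]
        refine Finset.sum_congr rfl fun l hl => ?_
        simp only [Finset.mem_range] at hl
        have h1 : (i:ℕ) ≤ l + 1 := by omega
        have h2 : l ≤ (j:ℕ) := by omega
        have h3 : l + 1 - (i:ℕ) = l + 1 := by omega
        rw [hg]
        simp only [if_pos h1, if_pos h2, h3]
        rw [pow_add]
        ring
      rw [hval, hstep]
      simp only [hN, Matrix.of_apply, if_pos hi]
    · -- other rows
      simp only [hN, Matrix.of_apply, if_neg hi]
      by_cases hji : (j:ℕ)+1 = (i:ℕ)
      · rw [if_pos hji]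
        rw [Finset.sum_eq_single_of_mem (j:ℕ) (Finset.mem_range.mpr j.isLt)]
        · have h1 : (i:ℕ) ≤ (j:ℕ)+1 := by omega
          have h3 : (j:ℕ)+1-(i:ℕ) = 0 := by omega
          rw [hg]
          simp only [if_pos h1, le_refl, if_pos, h3, ha0, Nat.sub_self, hb0, mul_one]
          rw [one_mul, ← two_mul, pow_mul]
          norm_num
        · intro l hl hlj
          show g l = 0
          rw [hg]
          beta_reduce
          rcases lt_or_gt_of_ne hlj with h | h
          · rw [if_neg (show ¬ ((i:ℕ) ≤ l + 1) by omega), zero_mul]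
          · rw [mul_comm, if_neg (show ¬ (l ≤ (j:ℕ)) by omega), zero_mul]
      · rw [if_neg hji]
        by_cases hbig : (j:ℕ)+1 < (i:ℕ)
        · refine Finset.sum_eq_zero fun l hl => ?_
          show g l = 0
          rw [hg]
          beta_reduce
          by_cases hlj : l ≤ (j:ℕ)
          · rw [if_neg (show ¬ ((i:ℕ) ≤ l + 1) by omega), zero_mul]
          · rw [mul_comm, if_neg hlj, zero_mul]
        · -- 1 ≤ i ≤ j
          have hij : (i:ℕ) ≤ (j:ℕ) := by omega
          obtain ⟨i0, hi0⟩ : ∃ i0, (i:ℕ) = i0 + 1 := ⟨(i:ℕ)-1, by omega⟩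
          have hshrink : ∑ l ∈ Finset.range r, g l = ∑ l ∈ Finset.Ico i0 ((j:ℕ)+1), g l := by
            refine (Finset.sum_subset (by
              intro l hl
              simp only [Finset.mem_Ico] at hl
              exact Finset.mem_range.mpr (by omega)) ?_).symm
            intro l hl hnl
            simp only [Finset.mem_range] at hl
            simp only [Finset.mem_Ico, not_and_or, not_le, not_lt] at hnl
            show g l = 0
            rw [hg]
            beta_reduce
            rcases hnl with h | h
            · rw [if_neg (show ¬ ((i:ℕ) ≤ l + 1) by omega), zero_mul]
            · rw [mul_comm, if_neg (show ¬ (l ≤ (j:ℕ)) by omega), zero_mul]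
          rw [hshrink, Finset.sum_Ico_eq_sum_range]
          set n : ℕ := (j:ℕ) - i0 with hn
          have hcard : (j:ℕ) + 1 - i0 = n + 1 := by omega
          rw [hcard]
          have hval : ∑ m ∈ Finset.range (n+1), g (i0 + m)
              = (-1:R)^(i0+(j:ℕ)) * ∑ m ∈ Finset.range (n+1), (-1:R)^m * a m * b (n-m) := by
            rw [Finset.mul_sum]
            refine Finset.sum_congr rfl fun m hm => ?_
            simp only [Finset.mem_range] at hm
            have h1 : (i:ℕ) ≤ i0 + m + 1 := by omega
            have h2 : i0 + m ≤ (j:ℕ) := by omega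
            have h3 : i0 + m + 1 - (i:ℕ) = m := by omega
            have h4 : (j:ℕ) - (i0 + m) = n - m := by omega
            rw [hg]
            simp only [if_pos h1, if_pos h2, h3, h4]
            have h5 : i0 + m + (j:ℕ) = (i0 + (j:ℕ)) + m := by omega
            rw [h5, pow_add]
            ring
          rw [hval, hconv n, if_neg (by omega), mul_zero]
  -- determinant of N
  have hdetN : N.det = b r := by
    set σ : Equiv.Perm (Fin r) := finRotate (s+1) with hσ
    have hsub : ∀ i j : Fin r, (N.submatrix σ id) i j
        = if i = Fin.last s then (-1:R)^(j:ℕ) * b ((j:ℕ)+1)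
          else if (j:ℕ) = (i:ℕ) then 1 else 0 := by
      intro i j
      rw [Matrix.submatrix_apply, hσ, finRotate_succ_apply, id]
      by_cases hil : i = Fin.last s
      · subst hil
        rw [Fin.last_add_one]
        simp [hN]
      · have hlt : i < Fin.last s := lt_of_le_of_ne (Fin.le_last i) hil
        have hv : ((i+1 : Fin r) : ℕ) = (i:ℕ) + 1 := Fin.val_add_one_of_lt hlt
        simp only [hN, Matrix.of_apply, hv, if_neg hil]
        rw [if_neg (by omega)]
        by_cases h : (j:ℕ) = (i:ℕ)
        · rw [if_pos h, if_pos (by omega)]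
        · rw [if_neg h, if_neg (by omega)]
    have htri : (N.submatrix σ id).BlockTriangular OrderDual.toDual := by
      intro i j hij
      have hij' : i < j := hij
      rw [hsub]
      have h1 : i ≠ Fin.last s := by
        intro h
        subst h
        exact absurd hij' (not_lt.mpr (Fin.le_last j))
      rw [Fin.lt_def] at hij'
      rw [if_neg h1, if_neg (by omega)]
    have hdet' : (N.submatrix σ id).det = (-1:R)^s * b r := by
      rw [Matrix.det_of_lowerTriangular _ htri]
      rw [Finset.prod_eq_single (Fin.last s) ?_ (by simp)]
      · rw [hsub, if_pos rfl, Fin.val_last]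
      · intro c _ hc
        rw [hsub, if_neg hc, if_pos rfl]
    have hperm := Matrix.det_permute σ N
    rw [hdet', hσ, sign_finRotate] at hperm
    have hsign : ((((-1:ℤˣ)^s : ℤˣ) : ℤ) : R) = (-1:R)^s := by
      push_cast
      norm_num
    rw [show r - 1 = s by omega, hsign] at hperm
    have hcancel := congrArg (fun t => (-1:R)^s * t) hperm
    exact (by simpa [← mul_assoc, ← pow_add, Even.neg_one_pow (⟨s, rfl⟩ : Even (s+s))] using hcancel : b r = N.det).symm
  calc M.det = M.det * T.det := by rw [hdetT, mul_one]
    _ = (M * T).det := (Matrix.det_mul M T).symm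
    _ = b r := by rw [hMT, hdetN]



lemma coeff_prod_one_add {k : ℕ} (y : Fin k → R) (n : ℕ) :
    PowerSeries.coeff n (∏ j : Fin k, (1 + PowerSeries.C (y j) * PowerSeries.X)) =
      esymmVal y n := by
  show _ = ∑ s ∈ Finset.powersetCard n (Finset.univ : Finset (Fin k)), ∏ j ∈ s, y j
  have h1 : ∀ j : Fin k, (1 + PowerSeries.C (y j) * PowerSeries.X)
      = (PowerSeries.C (y j) * PowerSeries.X + 1) := fun j => add_comm _ _
  simp_rw [h1]
  rw [Finset.prod_add]
  simp only [Finset.prod_const_one, mul_one]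
  rw [map_sum]
  have hterm : ∀ t : Finset (Fin k),
      PowerSeries.coeff n (∏ i ∈ t, PowerSeries.C (y i) * PowerSeries.X)
        = if t.card = n then ∏ i ∈ t, y i else 0 := by
    intro t
    rw [Finset.prod_mul_distrib, Finset.prod_const, ← map_prod,
      PowerSeries.coeff_C_mul, PowerSeries.coeff_X_pow]
    by_cases h : t.card = n
    · simp [h]
    · simp [h, Ne.symm h]
  simp_rw [hterm]
  rw [← Finset.sum_filter, Finset.powersetCard_eq_filter]

lemma sum_coeff_mul_comm (P E' : PowerSeries R) (m : ℕ) :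
    ∑ i ∈ Finset.range (m+1), PowerSeries.coeff (m-i) P * PowerSeries.coeff i E'
      = PowerSeries.coeff m (P * E') := by
  rw [mul_comm, PowerSeries.coeff_mul, Finset.Nat.sum_antidiagonal_eq_sum_range_succ_mk]
  exact Finset.sum_congr rfl fun i _ => mul_comm _ _

end Aux

/-- for `k ≥ 1` and `r ∈ ℕ`, the theta polynomial of the column `(1^r)`,
`Θ_{(1^r)} = det(ϑ_{1+j−i})_{1≤i,j≤r}`, equals the dual theta polynomial
`ϑ̂_r(x;y) = ∑_i q_{r-i}(x) h_i(y)`, where `h_i(y)` is the `i`-th coefficient of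
`H = ∏ⱼ (1 - yⱼ t)⁻¹`. -/
theorem stmt_13 {R : Type*} [CommRing R] (n k : ℕ) (hk : 1 ≤ k)
    (x : Fin n → R) (y : Fin k → R) (Q H : PowerSeries R)
    (hQ : Q * ∏ i : Fin n, (1 - PowerSeries.C (x i) * PowerSeries.X) =
          ∏ i : Fin n, (1 + PowerSeries.C (x i) * PowerSeries.X))
    (hH : H * ∏ j : Fin k, (1 - PowerSeries.C (y j) * PowerSeries.X) = 1)
    (r : ℕ) :
    Matrix.det (Matrix.of fun i j : Fin r => thInt Q y (1 + (j : ℕ) - (i : ℕ)))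
      = ∑ i ∈ Finset.range (r + 1),
          PowerSeries.coeff (r - i) Q * PowerSeries.coeff i H := by
  classical
  have hQQ : Q * rescale (-1 : R) Q = 1 := key_unit x Q hQ
  set Ey : PowerSeries R := ∏ j : Fin k, (1 + PowerSeries.C (y j) * PowerSeries.X) with hEy
  have hresE : rescale (-1 : R) Ey = ∏ j : Fin k, (1 - PowerSeries.C (y j) * PowerSeries.X) := by
    rw [hEy, map_prod]
    exact Finset.prod_congr rfl fun j _ => rescale_neg_one_add _
  have hFG : rescale (-1 : R) (Q * Ey) * (Q * H) = 1 := by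
    rw [map_mul, hresE]
    calc rescale (-1 : R) Q * (∏ j : Fin k, (1 - PowerSeries.C (y j) * PowerSeries.X)) * (Q * H)
        = (Q * rescale (-1 : R) Q) * (H * ∏ j : Fin k, (1 - PowerSeries.C (y j) * PowerSeries.X)) := by
          ring
      _ = 1 := by rw [hQQ, hH, one_mul]
  have ha0 : PowerSeries.coeff 0 (Q * Ey) = 1 := by
    have hcQ : PowerSeries.constantCoeff Q = 1 := by
      have h := congrArg (PowerSeries.constantCoeff) hQ
      simpa [map_prod] using h
    have hcE : PowerSeries.constantCoeff Ey = 1 := by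
      simp [hEy, map_prod]
    rw [PowerSeries.coeff_zero_eq_constantCoeff, map_mul, hcQ, hcE, one_mul]
  have hconv : ∀ m : ℕ, ∑ l ∈ Finset.range (m+1),
      (-1:R)^l * PowerSeries.coeff l (Q * Ey) * PowerSeries.coeff (m-l) (Q * H)
        = if m = 0 then 1 else 0 := by
    intro m
    have h := congrArg (PowerSeries.coeff m) hFG
    rw [PowerSeries.coeff_mul, Finset.Nat.sum_antidiagonal_eq_sum_range_succ_mk,
      PowerSeries.coeff_one] at h
    rw [← h]
    exact Finset.sum_congr rfl fun l _ => by rw [coeff_rescale]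
  have hmat : (Matrix.of fun i j : Fin r => thInt Q y (1 + (j : ℕ) - (i : ℕ)))
      = Matrix.of fun i j : Fin r =>
          if (i:ℕ) ≤ (j:ℕ)+1 then PowerSeries.coeff ((j:ℕ)+1-(i:ℕ)) (Q * Ey) else 0 := by
    ext i j
    simp only [Matrix.of_apply]
    rw [thInt]
    by_cases hij : (i:ℕ) ≤ (j:ℕ)+1
    · have h0 : (0:ℤ) ≤ 1 + (j:ℕ) - (i:ℕ) := by omega
      rw [if_pos h0, if_pos hij]
      have htn : (1 + (j:ℕ) - (i:ℕ) : ℤ).toNat = (j:ℕ)+1-(i:ℕ) := by omega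
      rw [htn, ← sum_coeff_mul_comm Q Ey]
      exact Finset.sum_congr rfl fun l _ => by rw [coeff_prod_one_add]
    · rw [if_neg (by omega), if_neg hij]
  rw [hmat, sum_coeff_mul_comm Q H]
  exact toeplitz_det (fun m => PowerSeries.coeff m (Q * Ey))
    (fun m => PowerSeries.coeff m (Q * H)) ha0 hconv r
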